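/- Define Q_n(x) = -(1/4) ∑_{j=0}^{n-1} 1/L_j(x)² where L_j(x) = ∏_{i=0}^j log_i(x), and u₀(x) = √(L_{n-1}(x)) (with L_{-1}(x) = 1). Then for x > e_n the function u₀ satisfies the second-order equation -u₀''(x) + Q_n(x) u₀(x) = 0. -/

import Mathlib

open Real Finset

/-- Iterated logarithm: `log₀(x) = x`, `log_{n+1}(x) = log(log_n x)`
(`Real.log` satisfies `Real.log x = Real.log |x|`, matching the paper's
convention `log x := log |x|` for negative arguments). -/
noncomputable def iterLog : ℕ → ℝ → ℝ
  | 0, x => x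
  | n + 1, x => Real.log (iterLog n x)

/-- `L_n(x) = ∏_{j=0}^n log_j(x)`. -/
noncomputable def iterL (n : ℕ) (x : ℝ) : ℝ :=
  ∏ j ∈ Finset.range (n + 1), iterLog j x

/-- `e_n`: `e₋₁ = -∞`, `e_n = exp(e_{n-1})`, so `e₀ = 0` and
`e_{n+1} = exp (e_n)`; `log_n` is positive on `(e_n, ∞)`. -/
noncomputable def iterE : ℕ → ℝ
  | 0 => 0
  | n + 1 => Real.exp (iterE n)

/-- `L_{n-1}` with the convention `L_{-1} = 1`. -/
noncomputable def iterLm : ℕ → ℝ → ℝ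
  | 0, _ => 1
  | n + 1, x => iterL n x

/-- `Q_n(x) = -(1/4) ∑_{j=0}^{n-1} 1/L_j(x)²`. -/
noncomputable def iterQ (n : ℕ) (x : ℝ) : ℝ :=
  -(1 / 4) * ∑ j ∈ Finset.range n, 1 / iterL j x ^ 2

/-- The function `u₀(x) = √(L_{n-1}(x))` satisfies `-u₀'' + Q_n u₀ = 0`
on `(e_n, ∞)`. -/
lemma iterE_nonneg (n : ℕ) : 0 ≤ iterE n := by
  cases n with
  | zero => simp [iterE]
  | succ k => exact (Real.exp_pos _).le

lemma iterL_eq (j : ℕ) (x : ℝ) : iterL j x = iterLm j x * iterLog j x := by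
  cases j with
  | zero => simp [iterL, iterLm]
  | succ k => simp [iterL, iterLm, Finset.prod_range_succ]

lemma iterL_succ (j : ℕ) (x : ℝ) : iterL (j+1) x = iterL j x * iterLog (j+1) x := by
  simp [iterL, Finset.prod_range_succ]

lemma iterLog_gt {n : ℕ} {x : ℝ} (hx : iterE n < x) :
    ∀ j ≤ n, iterE (n - j) < iterLog j x := by
  intro j hj
  induction j with
  | zero => simpa [iterLog] using hx
  | succ k ih =>
    have hk : k < n := hj
    have h1 : iterE (n - k) < iterLog k x := ih hk.le
    have h2 : n - k = (n - (k+1)) + 1 := by omega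
    rw [h2] at h1
    have hlog : iterE (n - (k+1)) < Real.log (iterLog k x) := by
      have := Real.log_lt_log (Real.exp_pos _) h1
      rwa [Real.log_exp] at this
    simpa [iterLog] using hlog

lemma iterLog_pos {n : ℕ} {x : ℝ} (hx : iterE n < x) : ∀ j ≤ n, 0 < iterLog j x :=
  fun j hj => lt_of_le_of_lt (iterE_nonneg _) (iterLog_gt hx j hj)

lemma iterL_pos {n : ℕ} {x : ℝ} (hx : iterE n < x) : ∀ j ≤ n, 0 < iterL j x := by
  intro j hj
  exact Finset.prod_pos fun i hi =>
    iterLog_pos hx i (le_trans (Nat.lt_succ_iff.mp (Finset.mem_range.mp hi)) hj)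

lemma iterLm_pos {n : ℕ} {x : ℝ} (hx : iterE n < x) : ∀ j ≤ n, 0 < iterLm j x := by
  intro j hj
  cases j with
  | zero => norm_num [iterLm]
  | succ k => exact iterL_pos hx k (le_trans (Nat.le_succ k) hj)

lemma hasDerivAt_iterLog {n : ℕ} {x : ℝ} (hx : iterE n < x) :
    ∀ j ≤ n, HasDerivAt (iterLog j) ((iterLm j x)⁻¹) x := by
  intro j hj
  induction j with
  | zero =>
    simpa [iterLog, iterLm] using (hasDerivAt_id' x).congr_deriv (by norm_num [iterLm])
  | succ k ih =>
    have hk : k ≤ n := le_trans (Nat.le_succ k) hj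
    have hpos := iterLog_pos hx k hk
    have h := (Real.hasDerivAt_log hpos.ne').comp x (ih hk)
    have hfun : (Real.log ∘ iterLog k) = iterLog (k+1) := rfl
    have hval : (iterLog k x)⁻¹ * (iterLm k x)⁻¹ = (iterLm (k+1) x)⁻¹ := by
      have : iterLm (k+1) x = iterLm k x * iterLog k x := iterL_eq k x
      rw [this, mul_inv]; ring
    rw [hfun, hval] at h
    exact h

lemma hasDerivAt_iterL {n : ℕ} {x : ℝ} (hx : iterE n < x) :
    ∀ j ≤ n, HasDerivAt (iterL j)
      (iterL j x * ∑ i ∈ Finset.range (j+1), (iterL i x)⁻¹) x := by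
  intro j hj
  induction j with
  | zero =>
    have hx0 : (0:ℝ) < x := lt_of_le_of_lt (iterE_nonneg n) hx
    have hfun : iterL 0 = fun y => y := by funext y; simp [iterL, iterLog]
    have hL0 : iterL 0 x = x := by rw [hfun]
    rw [hfun]
    refine (hasDerivAt_id' x).congr_deriv ?_
    simp [iterL, iterLog, mul_inv_cancel₀ hx0.ne']
  | succ k ih =>
    have hk : k ≤ n := le_trans (Nat.le_succ k) hj
    have hLk := iterL_pos hx k hk
    have hLk1 := iterL_pos hx (k+1) hj
    have hlogk1 := iterLog_pos hx (k+1) hj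
    have hfun : iterL (k+1) = fun y => iterL k y * iterLog (k+1) y := by
      funext y; exact iterL_succ k y
    have h := (ih hk).mul (hasDerivAt_iterLog hx (k+1) hj)
    rw [show iterL k * iterLog (k+1) = iterL (k+1) from hfun.symm] at h
    have hLm : iterLm (k+1) x = iterL k x := rfl
    refine h.congr_deriv ?_
    symm
    rw [hLm, Finset.sum_range_succ, iterL_succ]
    rw [mul_add, mul_inv_cancel₀ (mul_pos hLk hlogk1).ne', mul_inv_cancel₀ hLk.ne']
    ring

lemma sq_sum_aux (a : ℕ → ℝ) (N : ℕ) :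
    (∑ j ∈ Finset.range N, a j)^2
      = 2 * ∑ j ∈ Finset.range N, (∑ i ∈ Finset.range (j+1), a i) * a j
        - ∑ j ∈ Finset.range N, a j ^ 2 := by
  induction N with
  | zero => simp
  | succ k ih =>
    rw [Finset.sum_range_succ, Finset.sum_range_succ (fun j => (∑ i ∈ Finset.range (j+1), a i) * a j),
      Finset.sum_range_succ (fun j => a j ^ 2), Finset.sum_range_succ]
    ring_nf
    ring_nf at ih
    linarith

theorem stmt_16 (n : ℕ) :
    ∃ u₀' u₀'' : ℝ → ℝ, ∀ x > iterE n,
      HasDerivAt (fun y => Real.sqrt (iterLm n y)) (u₀' x) x ∧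
      HasDerivAt u₀' (u₀'' x) x ∧
      -u₀'' x + iterQ n x * Real.sqrt (iterLm n x) = 0 := by
  cases n with
  | zero =>
    refine ⟨fun _ => 0, fun _ => 0, fun x hx => ?_⟩
    refine ⟨?_, hasDerivAt_const x 0, by simp [iterQ]⟩
    have hfun : (fun y : ℝ => Real.sqrt (iterLm 0 y)) = fun _ => Real.sqrt 1 := rfl
    rw [hfun]
    exact hasDerivAt_const x _
  | succ m =>
    refine ⟨fun y => Real.sqrt (iterL m y) * (∑ j ∈ Finset.range (m+1), (iterL j y)⁻¹) / 2,
      fun y => (Real.sqrt (iterL m y) * (∑ j ∈ Finset.range (m+1), (iterL j y)⁻¹) / 2 *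
          (∑ j ∈ Finset.range (m+1), (iterL j y)⁻¹) +
        Real.sqrt (iterL m y) *
          (∑ j ∈ Finset.range (m+1),
            -((∑ i ∈ Finset.range (j+1), (iterL i y)⁻¹) * (iterL j y)⁻¹))) / 2,
      fun x hx => ?_⟩
    have hL : 0 < iterL m x := iterL_pos hx m (Nat.le_succ m)
    have hsq : 0 < Real.sqrt (iterL m x) := Real.sqrt_pos.mpr hL
    have h2 : Real.sqrt (iterL m x) * Real.sqrt (iterL m x) = iterL m x :=
      Real.mul_self_sqrt hL.le
    -- first derivative
    have h1 : HasDerivAt (fun y => Real.sqrt (iterL m y))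
        (Real.sqrt (iterL m x) * (∑ j ∈ Finset.range (m+1), (iterL j x)⁻¹) / 2) x := by
      have h := (hasDerivAt_iterL hx m (Nat.le_succ m)).sqrt hL.ne'
      convert h using 1
      rw [div_eq_div_iff two_ne_zero (by positivity)]
      linear_combination (2 * ∑ j ∈ Finset.range (m+1), (iterL j x)⁻¹) * h2
    -- derivative of the sum of inverses
    have hS : HasDerivAt (fun y => ∑ j ∈ Finset.range (m+1), (iterL j y)⁻¹)
        (∑ j ∈ Finset.range (m+1),
          -((∑ i ∈ Finset.range (j+1), (iterL i x)⁻¹) * (iterL j x)⁻¹)) x := by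
      refine HasDerivAt.fun_sum fun j hj => ?_
      have hjm : j ≤ m + 1 := (Finset.mem_range.mp hj).le
      have hLj : 0 < iterL j x := iterL_pos hx j hjm
      have h := (hasDerivAt_iterL hx j hjm).inv hLj.ne'
      refine h.congr_deriv ?_
      field_simp
    have hfun : (fun y : ℝ => Real.sqrt (iterLm (m+1) y)) = fun y => Real.sqrt (iterL m y) := rfl
    refine ⟨by rw [hfun]; exact h1, (h1.mul hS).div_const 2, ?_⟩
    have hlm : iterLm (m+1) x = iterL m x := rfl
    have hQ : ∑ j ∈ Finset.range (m+1), 1 / iterL j x ^ 2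
        = ∑ j ∈ Finset.range (m+1), ((iterL j x)⁻¹) ^ 2 := by
      simp [one_div, inv_pow]
    have key := sq_sum_aux (fun j => (iterL j x)⁻¹) (m+1)
    rw [iterQ, hlm, hQ]
    beta_reduce
    rw [Finset.sum_neg_distrib]
    linear_combination (-(Real.sqrt (iterL m x) / 4)) * key
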